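/- arXiv:1508.01056 — 3 statements merged into one kernel-verified Lean document; each statement's English description precedes it below -/
import Mathlib

section
/- Let A be an n×n real matrix, σ₁ > 0, and u, v ∈ ℝⁿ unit vectors with A v = σ₁ u and Aᵀ u = σ₁ v. Fix indices i, j and let Ã = A + e_i e_jᵀ be the matrix obtained by adding the (virtual) edge (i,j). Then the largest eigenvalue σ̃₁² of the new hub matrix ÃÃᵀ, which equals the largest eigenvalue of the new authority matrix ÃᵀÃ, satisfies σ̃₁² ≥ σ₁² + 2σ₁ u(i) v(j) + max{u(i)², v(j)²}. -/
open Matrix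

/-- The set of Rayleigh quotients `zᵀ M z` of `M` over unit vectors `z`; for a real
symmetric matrix, the largest eigenvalue is the greatest element of this set. -/
def raySet {n : ℕ} (M : Matrix (Fin n) (Fin n) ℝ) : Set ℝ :=
  {r | ∃ z : Fin n → ℝ, z ⬝ᵥ z = 1 ∧ r = z ⬝ᵥ (M *ᵥ z)}

private lemma dot_self_nonneg' {n : ℕ} (w : Fin n → ℝ) : 0 ≤ w ⬝ᵥ w :=
  Finset.sum_nonneg fun _ _ => mul_self_nonneg _

private lemma dot_cs {n : ℕ} (a b : Fin n → ℝ) : (a ⬝ᵥ b) ^ 2 ≤ (a ⬝ᵥ a) * (b ⬝ᵥ b) := by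
  have := Finset.sum_mul_sq_le_sq_mul_sq Finset.univ a b
  simpa [dotProduct, pow_two] using this

private lemma ray_val {n : ℕ} (M : Matrix (Fin n) (Fin n) ℝ) (z : Fin n → ℝ) :
    z ⬝ᵥ ((M * Mᵀ) *ᵥ z) = (Mᵀ *ᵥ z) ⬝ᵥ (Mᵀ *ᵥ z) := by
  rw [← Matrix.mulVec_mulVec, Matrix.dotProduct_mulVec, ← Matrix.mulVec_transpose]

private lemma ray_mem {n : ℕ} (M : Matrix (Fin n) (Fin n) ℝ) {z : Fin n → ℝ} (hz : z ⬝ᵥ z = 1) :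
    (Mᵀ *ᵥ z) ⬝ᵥ (Mᵀ *ᵥ z) ∈ raySet (M * Mᵀ) := ⟨z, hz, (ray_val M z).symm⟩

private lemma ub_transfer {n : ℕ} (M : Matrix (Fin n) (Fin n) ℝ) {s : ℝ} (hs0 : 0 ≤ s)
    (hub : s ∈ upperBounds (raySet (M * Mᵀ))) : s ∈ upperBounds (raySet (Mᵀ * M)) := by
  rintro r ⟨z, hz, rfl⟩
  have hval : z ⬝ᵥ ((Mᵀ * M) *ᵥ z) = (M *ᵥ z) ⬝ᵥ (M *ᵥ z) := by
    simpa using ray_val Mᵀ z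
  rw [hval]
  set w := M *ᵥ z with hw
  rcases eq_or_lt_of_le (dot_self_nonneg' w) with h0 | hpos
  · rw [← h0]; exact hs0
  · set c := w ⬝ᵥ w with hcdef
    have hc : 0 < c := hpos
    set t := Real.sqrt c with htdef
    have htpos : 0 < t := Real.sqrt_pos.mpr hc
    have ht0 : t ≠ 0 := ne_of_gt htpos
    have hsq : t * t = c := Real.mul_self_sqrt hc.le
    have hz'unit : (t⁻¹ • w) ⬝ᵥ (t⁻¹ • w) = 1 := by
      simp only [smul_dotProduct, dotProduct_smul, smul_eq_mul, ← hcdef]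
      field_simp
      exact hsq.symm.trans (pow_two t).symm
    have h1 := hub (ray_mem M hz'unit)
    set D := (Mᵀ *ᵥ w) ⬝ᵥ (Mᵀ *ᵥ w) with hDdef
    have h1' : t⁻¹ * (t⁻¹ * D) ≤ s := by
      simpa [Matrix.mulVec_smul, smul_dotProduct, dotProduct_smul,
        smul_eq_mul, hDdef, mul_assoc] using h1
    have hCS : c ^ 2 ≤ D := by
      have hc' : c = (Mᵀ *ᵥ w) ⬝ᵥ z := by
        rw [hcdef, hw]
        rw [dotProduct_comm, Matrix.dotProduct_mulVec, ← Matrix.mulVec_transpose]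
      calc c ^ 2 = ((Mᵀ *ᵥ w) ⬝ᵥ z) ^ 2 := by rw [hc']
        _ ≤ ((Mᵀ *ᵥ w) ⬝ᵥ (Mᵀ *ᵥ w)) * (z ⬝ᵥ z) := dot_cs _ _
        _ = D := by rw [hz, hDdef, mul_one]
    have hD : D ≤ s * c := by
      have h3 : (t⁻¹ * (t⁻¹ * D)) * (t * t) ≤ s * (t * t) :=
        mul_le_mul_of_nonneg_right h1' (by positivity)
      calc D = (t⁻¹ * (t⁻¹ * D)) * (t * t) := by field_simp
        _ ≤ s * (t * t) := h3
        _ = s * c := by rw [hsq]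
    nlinarith [hc, hD, hCS]

private lemma greatest_transfer {n : ℕ} (hn : 0 < n) (M : Matrix (Fin n) (Fin n) ℝ) {s : ℝ}
    (hs : IsGreatest (raySet (M * Mᵀ)) s) : IsGreatest (raySet (Mᵀ * M)) s := by
  obtain ⟨hmem, hub⟩ := hs
  obtain ⟨w, hw, hsval⟩ := hmem
  have hsval' : s = (Mᵀ *ᵥ w) ⬝ᵥ (Mᵀ *ᵥ w) := by rw [hsval, ray_val]
  have hs0 : 0 ≤ s := hsval' ▸ dot_self_nonneg' _
  have hub' := ub_transfer M hs0 hub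
  refine ⟨?_, hub'⟩
  rcases eq_or_lt_of_le hs0 with h0 | hpos
  · -- s = 0
    set z0 : Fin n → ℝ := Pi.single ⟨0, hn⟩ 1 with hz0def
    have hz0 : z0 ⬝ᵥ z0 = 1 := by
      simp [hz0def, dotProduct_single, Pi.single_apply]
    have hmem0 : (z0 ⬝ᵥ ((Mᵀ * M) *ᵥ z0)) ∈ raySet (Mᵀ * M) := ⟨z0, hz0, rfl⟩
    have hle := hub' hmem0
    have hval0 : z0 ⬝ᵥ ((Mᵀ * M) *ᵥ z0) = (M *ᵥ z0) ⬝ᵥ (M *ᵥ z0) := by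
      simpa using ray_val Mᵀ z0
    have hge : 0 ≤ z0 ⬝ᵥ ((Mᵀ * M) *ᵥ z0) := hval0 ▸ dot_self_nonneg' _
    have : z0 ⬝ᵥ ((Mᵀ * M) *ᵥ z0) = s := le_antisymm hle (by rw [← h0]; exact hge)
    exact this ▸ hmem0
  · -- s > 0
    set q := Mᵀ *ᵥ w with hq
    set t := Real.sqrt s with htdef
    have htpos : 0 < t := Real.sqrt_pos.mpr hpos
    have ht0 : t ≠ 0 := ne_of_gt htpos
    have hsq : t * t = s := Real.mul_self_sqrt hs0
    have hzunit : (t⁻¹ • q) ⬝ᵥ (t⁻¹ • q) = 1 := by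
      simp only [smul_dotProduct, dotProduct_smul, smul_eq_mul, ← hq]
      rw [← hsval']
      field_simp
      exact hsq.symm.trans (pow_two t).symm
    have hmem1 : ((t⁻¹ • q) ⬝ᵥ ((Mᵀ * M) *ᵥ (t⁻¹ • q))) ∈ raySet (Mᵀ * M) :=
      ⟨t⁻¹ • q, hzunit, rfl⟩
    have hle := hub' hmem1
    set D := (M *ᵥ q) ⬝ᵥ (M *ᵥ q) with hDdef
    have hval1 : (t⁻¹ • q) ⬝ᵥ ((Mᵀ * M) *ᵥ (t⁻¹ • q)) = t⁻¹ * (t⁻¹ * D) := by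
      have := ray_val Mᵀ (t⁻¹ • q)
      simp only [Matrix.transpose_transpose] at this
      rw [this]
      simp [Matrix.mulVec_smul, smul_dotProduct, dotProduct_smul,
        smul_eq_mul, hDdef, mul_assoc]
    have hCS : s ^ 2 ≤ D := by
      have hc' : s = (M *ᵥ q) ⬝ᵥ w := by
        rw [hsval', hq]
        rw [dotProduct_comm, Matrix.dotProduct_mulVec, ← Matrix.mulVec_transpose,
          Matrix.transpose_transpose, dotProduct_comm]
      calc s ^ 2 = ((M *ᵥ q) ⬝ᵥ w) ^ 2 := by rw [hc']
        _ ≤ ((M *ᵥ q) ⬝ᵥ (M *ᵥ q)) * (w ⬝ᵥ w) := dot_cs _ _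
        _ = D := by rw [hw, hDdef, mul_one]
    have hge : s ≤ t⁻¹ * (t⁻¹ * D) := by
      have h3 : s * (t * t) ≤ D := by nlinarith
      have : s = (s * (t * t)) * (t⁻¹ * t⁻¹) := by field_simp
      rw [this]
      have h4 : (s * (t * t)) * (t⁻¹ * t⁻¹) ≤ D * (t⁻¹ * t⁻¹) :=
        mul_le_mul_of_nonneg_right h3 (by positivity)
      calc (s * (t * t)) * (t⁻¹ * t⁻¹) ≤ D * (t⁻¹ * t⁻¹) := h4
        _ = t⁻¹ * (t⁻¹ * D) := by ring
    have : (t⁻¹ • q) ⬝ᵥ ((Mᵀ * M) *ᵥ (t⁻¹ • q)) = s :=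
      le_antisymm hle (by rw [hval1] at *; exact hge)
    exact this ▸ hmem1

private lemma std_mulVec {n : ℕ} (i j : Fin n) (x : Fin n → ℝ) :
    Matrix.single i j (1:ℝ) *ᵥ x = x j • (Pi.single i 1 : Fin n → ℝ) := by
  funext k
  simp [Matrix.mulVec, dotProduct, Matrix.single, Pi.single_apply,
    Finset.sum_ite_eq, ite_and, eq_comm]

private lemma stdT_mulVec {n : ℕ} (i j : Fin n) (x : Fin n → ℝ) :
    (Matrix.single i j (1:ℝ))ᵀ *ᵥ x = x i • (Pi.single j 1 : Fin n → ℝ) := by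
  funext k
  simp [Matrix.mulVec, dotProduct, Matrix.single, Matrix.transpose_apply,
    Pi.single_apply, Finset.sum_ite_eq, ite_and, eq_comm]

/-- Adding the (virtual) edge `(i,j)` to `A`: the largest eigenvalue `σ̃₁²` of the new hub
matrix `AtilAtilᵀ` (which equals the largest eigenvalue of the new authority matrix `AtilᵀAtil`)
satisfies `σ̃₁² ≥ σ₁² + 2σ₁ u(i) v(j) + max{u(i)², v(j)²}`. -/
theorem stmt_5 {n : ℕ} (A : Matrix (Fin n) (Fin n) ℝ) (σ₁ : ℝ) (hσ : 0 < σ₁)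
    (u v : Fin n → ℝ) (hu : u ⬝ᵥ u = 1) (hv : v ⬝ᵥ v = 1)
    (hAv : A *ᵥ v = σ₁ • u) (hATu : Aᵀ *ᵥ u = σ₁ • v)
    (i j : Fin n) (Atil : Matrix (Fin n) (Fin n) ℝ)
    (hAtil : Atil = A + Matrix.single i j 1)
    (s : ℝ) (hs : IsGreatest (raySet (Atil * Atilᵀ)) s) :
    IsGreatest (raySet (Atilᵀ * Atil)) s ∧
      s ≥ σ₁ ^ 2 + 2 * σ₁ * (u i * v j) + max (u i ^ 2) (v j ^ 2) := by
  have hn : 0 < n := i.pos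
  have hgr := greatest_transfer hn Atil hs
  refine ⟨hgr, ?_⟩
  -- Ãᵀ u = σ₁ v + u i • e_j
  have hATil_u : Atilᵀ *ᵥ u = σ₁ • v + u i • (Pi.single j 1 : Fin n → ℝ) := by
    rw [hAtil, Matrix.transpose_add, Matrix.add_mulVec, hATu, stdT_mulVec]
  -- Ã v = σ₁ u + v j • e_i
  have hATil_v : Atil *ᵥ v = σ₁ • u + v j • (Pi.single i 1 : Fin n → ℝ) := by
    rw [hAtil, Matrix.add_mulVec, hAv, std_mulVec]
  have hval1 : (Atilᵀ *ᵥ u) ⬝ᵥ (Atilᵀ *ᵥ u)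
      = σ₁ ^ 2 + 2 * σ₁ * (u i * v j) + u i ^ 2 := by
    rw [hATil_u]
    simp [add_dotProduct, dotProduct_add, smul_dotProduct,
      dotProduct_smul, dotProduct_single, single_dotProduct,
      Pi.single_apply, hv, smul_eq_mul, dotProduct_comm v]
    ring
  have hval2 : (Atil *ᵥ v) ⬝ᵥ (Atil *ᵥ v)
      = σ₁ ^ 2 + 2 * σ₁ * (u i * v j) + v j ^ 2 := by
    rw [hATil_v]
    simp [add_dotProduct, dotProduct_add, smul_dotProduct,
      dotProduct_smul, dotProduct_single, single_dotProduct,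
      Pi.single_apply, hu, smul_eq_mul, dotProduct_comm u]
    ring
  have h1 : σ₁ ^ 2 + 2 * σ₁ * (u i * v j) + u i ^ 2 ≤ s := by
    have := hs.2 (ray_mem Atil hu)
    rwa [hval1] at this
  have h2 : σ₁ ^ 2 + 2 * σ₁ * (u i * v j) + v j ^ 2 ≤ s := by
    have hmem : (Atil *ᵥ v) ⬝ᵥ (Atil *ᵥ v) ∈ raySet (Atilᵀ * Atil) := by
      have := ray_mem Atilᵀ hv
      simpa using this
    have := hgr.2 hmem
    rwa [hval2] at this
  rcases le_total (u i ^ 2) (v j ^ 2) with h | h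
  · rw [max_eq_right h]; linarith
  · rw [max_eq_left h]; linarith
end

section
/- Let U and V be n×n real orthogonal matrices, d : {1,…,n} → ℝ, and A = U diag(d) Vᵀ. If all entries of A are nonnegative, then all entries of the generalized hyperbolic sine sinh^⋄(A) = U diag(sinh(d_k)) Vᵀ are nonnegative, and likewise all entries of cosh(√(AAᵀ)) = U diag(cosh(d_k)) Uᵀ and of cosh(√(AᵀA)) = V diag(cosh(d_k)) Vᵀ are nonnegative. -/
open Matrix

section OldSqrt

open scoped ComplexOrder

/-- The positive semidefinite square root of a positive semidefinite matrix
(the Mathlib definition of December 2024, since removed). -/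
noncomputable def Matrix.PosSemidef.sqrt {n 𝕜 : Type*} [Fintype n] [DecidableEq n] [RCLike 𝕜]
    {A : Matrix n n 𝕜} (hA : A.PosSemidef) : Matrix n n 𝕜 :=
  hA.1.eigenvectorUnitary.1 * diagonal ((↑) ∘ (√·) ∘ hA.1.eigenvalues) *
  (star hA.1.eigenvectorUnitary : Matrix n n 𝕜)

end OldSqrt

/-- `cosh (√M) = (exp (√M) + exp (-√M)) / 2` for a PSD matrix `M`. -/
noncomputable def coshSqrt {n : ℕ} (M : Matrix (Fin n) (Fin n) ℝ) (hM : M.PosSemidef) :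
    Matrix (Fin n) (Fin n) ℝ :=
  ((1 : ℝ) / 2) • (NormedSpace.exp hM.sqrt + NormedSpace.exp (-hM.sqrt))

lemma psd_mul_transpose {n : ℕ} (A : Matrix (Fin n) (Fin n) ℝ) : (A * Aᵀ).PosSemidef := by
  simpa [Matrix.conjTranspose_eq_transpose_of_trivial] using
    Matrix.posSemidef_self_mul_conjTranspose A

lemma psd_transpose_mul {n : ℕ} (A : Matrix (Fin n) (Fin n) ℝ) : (Aᵀ * A).PosSemidef := by
  simpa [Matrix.conjTranspose_eq_transpose_of_trivial] using
    Matrix.posSemidef_conjTranspose_mul_self A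

/- Auxiliary lemmas -/

open scoped MatrixOrder

lemma pow_entry_nonneg {N : Type*} [Fintype N] [DecidableEq N] {M : Matrix N N ℝ}
    (h : ∀ p q, 0 ≤ M p q) : ∀ k p q, 0 ≤ (M ^ k) p q := by
  intro k
  induction k with
  | zero => intro p q; by_cases hpq : p = q <;> simp [pow_zero, Matrix.one_apply, hpq]
  | succ k ih =>
    intro p q
    rw [pow_succ, Matrix.mul_apply]
    exact Finset.sum_nonneg fun j _ => mul_nonneg (ih p j) (h j q)

lemma exp_entry_nonneg {N : Type*} [Fintype N] [DecidableEq N] {M : Matrix N N ℝ}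
    (h : ∀ p q, 0 ≤ M p q) (p q : N) : 0 ≤ NormedSpace.exp M p q := by
  letI : SeminormedRing (Matrix N N ℝ) := Matrix.linftyOpSemiNormedRing
  letI : NormedRing (Matrix N N ℝ) := Matrix.linftyOpNormedRing
  letI : NormedAlgebra ℝ (Matrix N N ℝ) := Matrix.linftyOpNormedAlgebra
  have hs : Summable fun k : ℕ => (((k : ℕ).factorial : ℝ)⁻¹) • M ^ k :=
    NormedSpace.expSeries_summable' M
  have h1 : HasSum (fun k : ℕ => (((k : ℕ).factorial : ℝ)⁻¹) • M ^ k) (NormedSpace.exp M) := by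
    rw [NormedSpace.exp_eq_tsum ℝ]
    exact hs.hasSum
  let L : Matrix N N ℝ →ₗ[ℝ] ℝ :=
    { toFun := fun B => B p q
      map_add' := fun _ _ => rfl
      map_smul' := fun _ _ => rfl }
  have h2 : HasSum (fun k : ℕ => (((k : ℕ).factorial : ℝ)⁻¹) • (M ^ k) p q)
      (NormedSpace.exp M p q) := h1.mapL (LinearMap.toContinuousLinearMap L)
  have h3 : (0:ℝ) ≤ NormedSpace.exp M p q :=
    hasSum_le (fun k => smul_nonneg (by positivity) (pow_entry_nonneg h k p q)) hasSum_zero h2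
  exact h3

lemma exp_conj_orth {N : Type*} [Fintype N] [DecidableEq N] (U M : Matrix N N ℝ)
    (hU : Uᵀ * U = 1) : NormedSpace.exp (U * M * Uᵀ) = U * NormedSpace.exp M * Uᵀ := by
  have hUnit : IsUnit U := (Matrix.isUnit_iff_isUnit_det _).mpr (Matrix.isUnit_det_of_left_inverse hU)
  have hinv : U⁻¹ = Uᵀ := Matrix.inv_eq_left_inv hU
  rw [← hinv]
  exact Matrix.exp_conj U M hUnit

lemma exp_diag {N : Type*} [Fintype N] [DecidableEq N] (v : N → ℝ) :
    NormedSpace.exp (Matrix.diagonal v) = Matrix.diagonal (fun k => Real.exp (v k)) := by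
  rw [Matrix.exp_diagonal, Pi.exp_def, ← Real.exp_eq_exp_ℝ]

lemma Qconj {n : ℕ} (E F : Matrix (Fin n) (Fin n) ℝ) :
    (Matrix.fromBlocks 1 1 1 (-1)) * Matrix.fromBlocks E 0 0 F *
      ((1/2 : ℝ) • Matrix.fromBlocks 1 1 1 (-1)) =
    Matrix.fromBlocks (((1:ℝ)/2)•(E+F)) (((1:ℝ)/2)•(E-F)) (((1:ℝ)/2)•(E-F)) (((1:ℝ)/2)•(E+F)) := by
  rw [mul_smul_comm]
  simp [Matrix.fromBlocks_multiply, Matrix.fromBlocks_smul, mul_neg, sub_eq_add_neg]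

lemma QmulQ {n : ℕ} :
    (Matrix.fromBlocks 1 1 1 (-1) : Matrix (Fin n ⊕ Fin n) (Fin n ⊕ Fin n) ℝ) *
      ((1/2 : ℝ) • Matrix.fromBlocks 1 1 1 (-1)) = 1 := by
  rw [mul_smul_comm]
  have : (2:ℝ)⁻¹ • (1 : Matrix (Fin n) (Fin n) ℝ) + (2:ℝ)⁻¹ • 1 = 1 := by
    rw [← add_smul]; norm_num
  simp [Matrix.fromBlocks_multiply, Matrix.fromBlocks_smul, this, ← Matrix.fromBlocks_one]

lemma Qinv {n : ℕ} :
    (Matrix.fromBlocks 1 1 1 (-1) : Matrix (Fin n ⊕ Fin n) (Fin n ⊕ Fin n) ℝ)⁻¹ =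
      (1/2 : ℝ) • Matrix.fromBlocks 1 1 1 (-1) :=
  Matrix.inv_eq_right_inv QmulQ

lemma conj_mul_conj {n : ℕ} (U X Y : Matrix (Fin n) (Fin n) ℝ) (hU : Uᵀ * U = 1) :
    (U * X * Uᵀ) * (U * Y * Uᵀ) = U * (X * Y) * Uᵀ := by
  calc (U * X * Uᵀ) * (U * Y * Uᵀ) = U * X * (Uᵀ * U) * Y * Uᵀ := by
        simp only [Matrix.mul_assoc]
    _ = U * (X * Y) * Uᵀ := by rw [hU]; simp only [Matrix.mul_one, Matrix.mul_assoc]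

lemma sqrt_conj {n : ℕ} (U : Matrix (Fin n) (Fin n) ℝ) (e : Fin n → ℝ) (hU : Uᵀ * U = 1)
    (M : Matrix (Fin n) (Fin n) ℝ) (hM : M.PosSemidef)
    (hMeq : M = U * Matrix.diagonal (fun k => e k * e k) * Uᵀ) :
    hM.sqrt = U * Matrix.diagonal (fun k => |e k|) * Uᵀ := by
  have hd : (Matrix.diagonal (fun k => |e k|)).PosSemidef := by
    rw [Matrix.posSemidef_diagonal_iff]
    intro i; exact abs_nonneg _
  have hPSD : (U * Matrix.diagonal (fun k => |e k|) * Uᵀ).PosSemidef := by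
    have := hd.mul_mul_conjTranspose_same U
    simpa [Matrix.conjTranspose_eq_transpose_of_trivial] using this
  have e1 : hM.sqrt = CFC.sqrt M := by
    rw [CFC.sqrt_eq_cfc, cfc_nnreal_eq_real _ M (Matrix.nonneg_iff_posSemidef.mpr hM), hM.1.cfc_eq]
    simp only [Matrix.PosSemidef.sqrt, Matrix.IsHermitian.cfc, Unitary.conjStarAlgAut_apply]
    congr 3
    funext i
    simp [Real.coe_sqrt, hM.eigenvalues_nonneg i]
  rw [e1]
  refine CFC.sqrt_unique (hb := Matrix.nonneg_iff_posSemidef.mpr hPSD) ?_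
  rw [conj_mul_conj U _ _ hU, Matrix.diagonal_mul_diagonal, hMeq]
  have habs : (fun i => |e i| * |e i|) = fun k => e k * e k :=
    funext fun k => abs_mul_abs_self (e k)
  rw [habs]

lemma coshSqrt_conj {n : ℕ} (U : Matrix (Fin n) (Fin n) ℝ) (e : Fin n → ℝ) (hU : Uᵀ * U = 1)
    (M : Matrix (Fin n) (Fin n) ℝ) (hM : M.PosSemidef)
    (hMeq : M = U * Matrix.diagonal (fun k => e k * e k) * Uᵀ) :
    coshSqrt M hM = U * Matrix.diagonal (fun k => Real.cosh (e k)) * Uᵀ := by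
  have hs := sqrt_conj U e hU M hM hMeq
  unfold coshSqrt
  rw [hs]
  have hneg : -(U * Matrix.diagonal (fun k => |e k|) * Uᵀ)
      = U * Matrix.diagonal (fun k => -|e k|) * Uᵀ := by
    rw [← Matrix.diagonal_neg, Matrix.mul_neg, Matrix.neg_mul]
  rw [hneg, exp_conj_orth U _ hU, exp_conj_orth U _ hU, exp_diag, exp_diag]
  rw [← Matrix.add_mul, ← Matrix.mul_add, Matrix.diagonal_add]
  rw [← Matrix.smul_mul, ← Matrix.mul_smul, ← Matrix.diagonal_smul]
  congr 2
  ext k j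
  by_cases h : k = j
  · subst h
    simp only [Matrix.diagonal_apply_eq, Pi.smul_apply, smul_eq_mul]
    rw [← Real.cosh_abs, Real.cosh_eq]
    ring
  · simp [Matrix.diagonal_apply_ne _ h]

/-- For orthogonal `U`, `V` and `A = U diag(d) Vᵀ` with all entries of `A` nonnegative,
all entries of the generalized hyperbolic sine `sinh^⋄(A) = U diag(sinh d_k) Vᵀ` are
nonnegative, and likewise all entries of `cosh(√(AAᵀ)) = U diag(cosh d_k) Uᵀ` and of
`cosh(√(AᵀA)) = V diag(cosh d_k) Vᵀ` are nonnegative. -/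
theorem stmt_12 {n : ℕ} (U V A : Matrix (Fin n) (Fin n) ℝ) (d : Fin n → ℝ)
    (hU : Uᵀ * U = 1) (hV : Vᵀ * V = 1)
    (hA : A = U * Matrix.diagonal d * Vᵀ)
    (hApos : ∀ p q, 0 ≤ A p q) :
    (∀ p q, 0 ≤ (U * Matrix.diagonal (fun k => Real.sinh (d k)) * Vᵀ) p q) ∧
    (∀ p q, 0 ≤ (U * Matrix.diagonal (fun k => Real.cosh (d k)) * Uᵀ) p q) ∧
    (∀ p q, 0 ≤ (V * Matrix.diagonal (fun k => Real.cosh (d k)) * Vᵀ) p q) ∧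
    U * Matrix.diagonal (fun k => Real.cosh (d k)) * Uᵀ =
      coshSqrt (A * Aᵀ) (psd_mul_transpose A) ∧
    V * Matrix.diagonal (fun k => Real.cosh (d k)) * Vᵀ =
      coshSqrt (Aᵀ * A) (psd_transpose_mul A) := by
  have hUU : U * Uᵀ = 1 := mul_eq_one_comm.mp hU
  have hVV : V * Vᵀ = 1 := mul_eq_one_comm.mp hV
  set D := Matrix.diagonal d with hD
  set C := Matrix.diagonal (fun k => Real.cosh (d k)) with hC
  set S := Matrix.diagonal (fun k => Real.sinh (d k)) with hS
  -- the bipartite lift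
  set W : Matrix (Fin n ⊕ Fin n) (Fin n ⊕ Fin n) ℝ := Matrix.fromBlocks U 0 0 V with hW
  have hWT : Wᵀ = Matrix.fromBlocks Uᵀ 0 0 Vᵀ := by
    rw [hW, Matrix.fromBlocks_transpose]; simp
  have hWo : Wᵀ * W = 1 := by
    rw [hWT, hW]
    simp [Matrix.fromBlocks_multiply, hU, hV, ← Matrix.fromBlocks_one]
  set B : Matrix (Fin n ⊕ Fin n) (Fin n ⊕ Fin n) ℝ := Matrix.fromBlocks 0 D D 0 with hB
  have hAT : Aᵀ = V * D * Uᵀ := by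
    rw [hA, Matrix.transpose_mul, Matrix.transpose_mul, Matrix.transpose_transpose,
      Matrix.diagonal_transpose, Matrix.mul_assoc]
  have hlift : W * B * Wᵀ = Matrix.fromBlocks 0 A Aᵀ 0 := by
    rw [hW, hB, hWT, hAT, hA]
    simp [Matrix.fromBlocks_multiply]
  -- exp of the middle block matrix
  set Q : Matrix (Fin n ⊕ Fin n) (Fin n ⊕ Fin n) ℝ := Matrix.fromBlocks 1 1 1 (-1) with hQ
  have hQunit : IsUnit Q :=
    (Matrix.isUnit_iff_isUnit_det _).mpr
      (Matrix.isUnit_det_of_left_inverse (mul_eq_one_comm.mp QmulQ))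
  have hhalf : ∀ X : Matrix (Fin n) (Fin n) ℝ, ((1:ℝ)/2) • (X + X) = X := by
    intro X
    rw [← two_smul ℝ X, smul_smul]
    norm_num
  have hBconj : B = Q * Matrix.fromBlocks D 0 0 (-D) * Q⁻¹ := by
    rw [hQ, Qinv, Qconj, hB]
    have h0 : ((1:ℝ)/2) • (D + -D) = 0 := by rw [add_neg_cancel, smul_zero]
    have h1 : ((1:ℝ)/2) • (D - -D) = D := by rw [sub_neg_eq_add]; exact hhalf D
    rw [h0, h1]
  have hED : Matrix.fromBlocks D 0 0 (-D) =
      Matrix.diagonal (Sum.elim d fun k => -(d k)) := by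
    rw [hD, Matrix.diagonal_neg, Matrix.fromBlocks_diagonal]
  have hexpED : NormedSpace.exp (Matrix.fromBlocks D 0 0 (-D)) =
      Matrix.fromBlocks (Matrix.diagonal fun k => Real.exp (d k)) 0 0
        (Matrix.diagonal fun k => Real.exp (-(d k))) := by
    rw [hED, exp_diag, Matrix.fromBlocks_diagonal]
    congr 1
    funext i
    cases i <;> rfl
  have hexpB : NormedSpace.exp B = Matrix.fromBlocks C S S C := by
    rw [hBconj, Matrix.exp_conj Q _ hQunit, hexpED, hQ, Qinv, Qconj]
    have hc : ((1:ℝ)/2) • ((Matrix.diagonal fun k => Real.exp (d k)) +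
        (Matrix.diagonal fun k => Real.exp (-(d k)))) = C := by
      rw [Matrix.diagonal_add, ← Matrix.diagonal_smul, hC]
      ext k j
      by_cases h : k = j
      · subst h
        simp only [Matrix.diagonal_apply_eq, Pi.smul_apply, smul_eq_mul, Real.cosh_eq]
        ring
      · simp [Matrix.diagonal_apply_ne _ h]
    have hsn : ((1:ℝ)/2) • ((Matrix.diagonal fun k => Real.exp (d k)) -
        (Matrix.diagonal fun k => Real.exp (-(d k)))) = S := by
      rw [Matrix.diagonal_sub, ← Matrix.diagonal_smul, hS]
      ext k j
      by_cases h : k = j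
      · subst h
        simp only [Matrix.diagonal_apply_eq, Pi.smul_apply, smul_eq_mul, Real.sinh_eq]
        ring
      · simp [Matrix.diagonal_apply_ne _ h]
    rw [hc, hsn]
  have hexpLift : NormedSpace.exp (Matrix.fromBlocks 0 A Aᵀ 0) =
      Matrix.fromBlocks (U * C * Uᵀ) (U * S * Vᵀ) (V * S * Uᵀ) (V * C * Vᵀ) := by
    rw [← hlift, exp_conj_orth W B hWo, hexpB, hW, hWT]
    simp [Matrix.fromBlocks_multiply, Matrix.mul_assoc]
  have hliftpos : ∀ p q, 0 ≤ (Matrix.fromBlocks 0 A Aᵀ 0 :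
      Matrix (Fin n ⊕ Fin n) (Fin n ⊕ Fin n) ℝ) p q := by
    rintro (p | p) (q | q) <;>
      simp [Matrix.fromBlocks_apply₁₁, Matrix.fromBlocks_apply₁₂, Matrix.fromBlocks_apply₂₁,
        Matrix.fromBlocks_apply₂₂, Matrix.transpose_apply, hApos]
  have key : ∀ p q, 0 ≤ (Matrix.fromBlocks (U * C * Uᵀ) (U * S * Vᵀ) (V * S * Uᵀ)
      (V * C * Vᵀ)) p q := by
    intro p q
    rw [← hexpLift]
    exact exp_entry_nonneg hliftpos p q
  have hMU : A * Aᵀ = U * Matrix.diagonal (fun k => d k * d k) * Uᵀ := by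
    rw [hAT, hA]
    calc U * D * Vᵀ * (V * D * Uᵀ) = U * (D * ((Vᵀ * V) * (D * Uᵀ))) := by
          simp only [Matrix.mul_assoc]
      _ = U * (Matrix.diagonal (fun k => d k * d k) * Uᵀ) := by
          rw [hV, Matrix.one_mul, hD,
            show Matrix.diagonal d * (Matrix.diagonal d * Uᵀ) =
              Matrix.diagonal d * Matrix.diagonal d * Uᵀ from (Matrix.mul_assoc _ _ _).symm,
            Matrix.diagonal_mul_diagonal]
      _ = U * Matrix.diagonal (fun k => d k * d k) * Uᵀ := by rw [Matrix.mul_assoc]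
  have hMV : Aᵀ * A = V * Matrix.diagonal (fun k => d k * d k) * Vᵀ := by
    rw [hAT, hA]
    calc V * D * Uᵀ * (U * D * Vᵀ) = V * (D * ((Uᵀ * U) * (D * Vᵀ))) := by
          simp only [Matrix.mul_assoc]
      _ = V * (Matrix.diagonal (fun k => d k * d k) * Vᵀ) := by
          rw [hU, Matrix.one_mul, hD,
            show Matrix.diagonal d * (Matrix.diagonal d * Vᵀ) =
              Matrix.diagonal d * Matrix.diagonal d * Vᵀ from (Matrix.mul_assoc _ _ _).symm,
            Matrix.diagonal_mul_diagonal]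
      _ = V * Matrix.diagonal (fun k => d k * d k) * Vᵀ := by rw [Matrix.mul_assoc]
  refine ⟨fun p q => ?_, fun p q => ?_, fun p q => ?_, ?_, ?_⟩
  · simpa using key (Sum.inl p) (Sum.inr q)
  · simpa using key (Sum.inl p) (Sum.inl q)
  · simpa using key (Sum.inr p) (Sum.inr q)
  · exact (coshSqrt_conj U d hU (A * Aᵀ) (psd_mul_transpose A) hMU).symm
  · exact (coshSqrt_conj V d hV (Aᵀ * A) (psd_transpose_mul A) hMV).symm
end

section
/- Let A be an n×n real matrix, fix indices i, j, and let Ã = A + e_i e_jᵀ. Then (1ᵀÃÃᵀ1 + 1ᵀÃᵀÃ1) − (1ᵀAAᵀ1 + 1ᵀAᵀA1) = 2(d_out(i) + d_in(j) + 1), where d_out = A1 and d_in = Aᵀ1. Consequently, under the second-order Maclaurin approximation cosh(√X) ≈ I + X/2 (X = AAᵀ or AᵀA), adding the edge (i,j) increases T_hC(A) + T_aC(A) by exactly d_out(i) + d_in(j) + 1, so the degree heuristic that maximizes d_out(i) + d_in(j) is optimal for this approximation. -/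
open Matrix

lemma key_aux {n : ℕ} (M : Matrix (Fin n) (Fin n) ℝ) (v : Fin n → ℝ) :
    v ⬝ᵥ ((M * Mᵀ) *ᵥ v) = (Mᵀ *ᵥ v) ⬝ᵥ (Mᵀ *ᵥ v) := by
  rw [← mulVec_mulVec, dotProduct_mulVec, ← mulVec_transpose]

lemma evec_aux {n : ℕ} (i j : Fin n) :
    (Matrix.single i j (1:ℝ)) *ᵥ (fun _ => 1) = Pi.single i 1 := by
  ext k
  simp only [mulVec, dotProduct, Matrix.single, of_apply, mul_one, Pi.single_apply]
  rcases eq_or_ne i k with h | h <;> simp [h, eq_comm, Finset.filter_eq]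

/-- Adding the edge `(i,j)` changes `1ᵀÃÃᵀ1 + 1ᵀÃᵀÃ1` by exactly
`2(d_out(i) + d_in(j) + 1)`; consequently, under the second-order Maclaurin approximation
`cosh(√X) ≈ I + X/2`, adding the edge `(i,j)` increases `T_hC(A) + T_aC(A)` by exactly
`d_out(i) + d_in(j) + 1` (so the degree heuristic maximizing `d_out(i) + d_in(j)` is
optimal for this approximation). -/
theorem stmt_15 {n : ℕ} (A : Matrix (Fin n) (Fin n) ℝ) (i j : Fin n)
    (Atil : Matrix (Fin n) (Fin n) ℝ) (hAtil : Atil = A + Matrix.single i j 1)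
    (ones dOut dIn : Fin n → ℝ) (hones : ones = fun _ => 1)
    (hdOut : dOut = A *ᵥ ones) (hdIn : dIn = Aᵀ *ᵥ ones) :
    (ones ⬝ᵥ ((Atil * Atilᵀ) *ᵥ ones) + ones ⬝ᵥ ((Atilᵀ * Atil) *ᵥ ones))
        - (ones ⬝ᵥ ((A * Aᵀ) *ᵥ ones) + ones ⬝ᵥ ((Aᵀ * A) *ᵥ ones))
      = 2 * (dOut i + dIn j + 1) ∧
    (ones ⬝ᵥ ((1 + ((1 : ℝ) / 2) • (Atil * Atilᵀ)) *ᵥ ones)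
        + ones ⬝ᵥ ((1 + ((1 : ℝ) / 2) • (Atilᵀ * Atil)) *ᵥ ones))
      - (ones ⬝ᵥ ((1 + ((1 : ℝ) / 2) • (A * Aᵀ)) *ᵥ ones)
        + ones ⬝ᵥ ((1 + ((1 : ℝ) / 2) • (Aᵀ * A)) *ᵥ ones))
      = dOut i + dIn j + 1 := by
  have hTt : Atilᵀ *ᵥ ones = (Aᵀ *ᵥ ones) + Pi.single j 1 := by
    have ht : (Matrix.single i j (1:ℝ))ᵀ = Matrix.single j i 1 := by
      ext a b; simp [Matrix.single, and_comm]
    rw [hAtil, transpose_add, add_mulVec, hones, ht, evec_aux]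
  have hT : Atil *ᵥ ones = (A *ᵥ ones) + Pi.single i 1 := by
    rw [hAtil, add_mulVec, hones, evec_aux]
  have h1 : ones ⬝ᵥ ((Atil * Atilᵀ) *ᵥ ones) - ones ⬝ᵥ ((A * Aᵀ) *ᵥ ones)
      = 2 * dIn j + 1 := by
    rw [key_aux, key_aux, hTt, hdIn]
    simp [dotProduct_add, add_dotProduct, dotProduct_comm]
    ring
  have h2 : ones ⬝ᵥ ((Atilᵀ * Atil) *ᵥ ones) - ones ⬝ᵥ ((Aᵀ * A) *ᵥ ones)
      = 2 * dOut i + 1 := by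
    have k1 := key_aux Atilᵀ ones
    have k2 := key_aux Aᵀ ones
    rw [transpose_transpose] at k1 k2
    rw [k1, k2, hT, hdOut]
    simp [dotProduct_add, add_dotProduct, dotProduct_comm]
    ring
  constructor
  · linarith
  · simp only [add_mulVec, one_mulVec, smul_mulVec, dotProduct_add, dotProduct_smul,
      smul_eq_mul]
    linarith
end
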